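/- If (λ_*, c_*) is a globally optimal solution of the dual problem, the zero duality gap property holds, and assumptions (A1) and (A7) are satisfied, then for any globally optimal solution x_* of the primal problem the pair (x_*, λ_*) is a global saddle point of the augmented Lagrangian, and c_*(x_*,λ_*) ≤ c_*. -/

import Mathlib

open Filter Topology Metric Set

noncomputable section

variable {X Y : Type*} [NormedAddCommGroup X] [NormedSpace ℝ X]
  [NormedAddCommGroup Y] [NormedSpace ℝ Y]

/-- Augmented Lagrangian `𝓛(x, λ, c) = f(x) + Φ(G(x), λ, c)`. -/
def lagr (f : X → EReal) (G : X → Y) (Φ : Y → (Y →L[ℝ] ℝ) → ℝ → EReal)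
    (x : X) (l : Y →L[ℝ] ℝ) (c : ℝ) : EReal :=
  f x + Φ (G x) l c

/-- Augmented dual function `Θ(λ, c) = inf_{x ∈ Q} 𝓛(x, λ, c)`. -/
def theta (Q : Set X) (f : X → EReal) (G : X → Y)
    (Φ : Y → (Y →L[ℝ] ℝ) → ℝ → EReal) (l : Y →L[ℝ] ℝ) (c : ℝ) : EReal :=
  ⨅ x ∈ Q, lagr f G Φ x l c

/-- Optimal value of the primal problem `min f(x) s.t. G(x) ∈ K, x ∈ Q`. -/
def primalVal (Q : Set X) (K : Set Y) (f : X → EReal) (G : X → Y) : EReal :=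
  ⨅ x ∈ {x ∈ Q | G x ∈ K}, f x

/-- Optimal value of the dual problem `max Θ(λ, c) over λ ∈ Λ, c > 0`. -/
def dualVal (Q : Set X) (Λ : Set (Y →L[ℝ] ℝ)) (f : X → EReal) (G : X → Y)
    (Φ : Y → (Y →L[ℝ] ℝ) → ℝ → EReal) : EReal :=
  ⨆ l ∈ Λ, ⨆ c ∈ Ioi (0 : ℝ), theta Q f G Φ l c

/-- `(l, c)` is a globally optimal solution of the dual problem. -/
def DualOpt (Q : Set X) (Λ : Set (Y →L[ℝ] ℝ)) (f : X → EReal) (G : X → Y)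
    (Φ : Y → (Y →L[ℝ] ℝ) → ℝ → EReal) (l : Y →L[ℝ] ℝ) (c : ℝ) : Prop :=
  l ∈ Λ ∧ 0 < c ∧ ∀ l' ∈ Λ, ∀ c' > (0 : ℝ), theta Q f G Φ l' c' ≤ theta Q f G Φ l c

/-- The saddle point inequalities hold for every `c ≥ c₀`. -/
def SaddleFrom (Q : Set X) (Λ : Set (Y →L[ℝ] ℝ)) (f : X → EReal) (G : X → Y)
    (Φ : Y → (Y →L[ℝ] ℝ) → ℝ → EReal) (x₀ : X) (l₀ : Y →L[ℝ] ℝ) (c₀ : ℝ) : Prop :=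
  ∀ c ≥ c₀, (⨆ l ∈ Λ, lagr f G Φ x₀ l c) ≤ lagr f G Φ x₀ l₀ c ∧
    lagr f G Φ x₀ l₀ c ≤ (⨅ x ∈ Q, lagr f G Φ x l₀ c) ∧
    (⨅ x ∈ Q, lagr f G Φ x l₀ c) < ⊤

/-- `(x₀, l₀)` is a global saddle point of the augmented Lagrangian. -/
def SaddlePt (Q : Set X) (Λ : Set (Y →L[ℝ] ℝ)) (f : X → EReal) (G : X → Y)
    (Φ : Y → (Y →L[ℝ] ℝ) → ℝ → EReal) (x₀ : X) (l₀ : Y →L[ℝ] ℝ) : Prop :=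
  x₀ ∈ Q ∧ l₀ ∈ Λ ∧ ∃ c₀ > (0 : ℝ), SaddleFrom Q Λ f G Φ x₀ l₀ c₀

/-- The least exact penalty parameter `c_*(x₀, l₀)` of a global saddle point. -/
def saddleCStar (Q : Set X) (Λ : Set (Y →L[ℝ] ℝ)) (f : X → EReal) (G : X → Y)
    (Φ : Y → (Y →L[ℝ] ℝ) → ℝ → EReal) (x₀ : X) (l₀ : Y →L[ℝ] ℝ) : ℝ :=
  sInf {c₀ : ℝ | 0 < c₀ ∧ SaddleFrom Q Λ f G Φ x₀ l₀ c₀}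

/-- `x₀` is a globally optimal solution of the primal problem. -/
def PrimalOpt (Q : Set X) (K : Set Y) (f : X → EReal) (G : X → Y) (x₀ : X) : Prop :=
  x₀ ∈ Q ∧ G x₀ ∈ K ∧ ∀ x ∈ Q, G x ∈ K → f x₀ ≤ f x

/-- If `(λ_*, c_*)` is a globally optimal dual solution, the zero duality gap property
holds, and axioms (A1) and (A7) are satisfied, then for any globally optimal primal
solution `x_*` the pair `(x_*, λ_*)` is a global saddle point, with
`c_*(x_*, λ_*) ≤ c_*`. -/
theorem dualOpt_implies_saddlePoint
    (Q : Set X) (K : Set Y) (Λ : Set (Y →L[ℝ] ℝ))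
    (f : X → EReal) (G : X → Y) (Φ : Y → (Y →L[ℝ] ℝ) → ℝ → EReal)
    (hQne : Q.Nonempty) (hQclosed : IsClosed Q)
    (hKclosed : IsClosed K) (hKconv : Convex ℝ K)
    (hKcone : ∀ y ∈ K, ∀ t : ℝ, 0 ≤ t → t • y ∈ K)
    (hfeas : {x ∈ Q | G x ∈ K}.Nonempty)
    (hfin : ∃ r : ℝ, primalVal Q K f G = (r : EReal))
    (hA1 : ∀ y ∈ K, ∀ l ∈ Λ, ∀ c : ℝ, 0 < c → Φ y l c ≤ 0)
    (hA7 : ∀ y : Y, ∀ l ∈ Λ, ∀ c₁ c₂ : ℝ, 0 < c₁ → c₁ ≤ c₂ → Φ y l c₁ ≤ Φ y l c₂)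
    (l₀ : Y →L[ℝ] ℝ) (c₀ : ℝ) (hopt : DualOpt Q Λ f G Φ l₀ c₀)
    (hgap : dualVal Q Λ f G Φ = primalVal Q K f G)
    (x₀ : X) (hx₀ : PrimalOpt Q K f G x₀) :
    SaddlePt Q Λ f G Φ x₀ l₀ ∧ saddleCStar Q Λ f G Φ x₀ l₀ ≤ c₀ := by
  obtain ⟨r, hr⟩ := hfin
  obtain ⟨hl₀, hc₀, hdom⟩ := hopt
  obtain ⟨hx₀Q, hGx₀, hmin⟩ := hx₀
  -- f x₀ = primalVal = r
  have hfx₀ : f x₀ = (r : EReal) := by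
    rw [← hr]
    refine le_antisymm ?_ ?_
    · exact le_iInf₂ fun x hx => hmin x hx.1 hx.2
    · exact iInf₂_le x₀ ⟨hx₀Q, hGx₀⟩
  -- theta l₀ c₀ = r
  have hth₀ : theta Q f G Φ l₀ c₀ = (r : EReal) := by
    refine le_antisymm ?_ ?_
    · rw [← hr, ← hgap]
      exact le_iSup₂_of_le l₀ hl₀ (le_iSup₂_of_le c₀ hc₀ le_rfl)
    · rw [← hr, ← hgap]
      exact iSup₂_le fun l hl => iSup₂_le fun c hc => hdom l hl c hc
  -- theta l₀ c = r for c ≥ c₀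
  have hth : ∀ c ≥ c₀, theta Q f G Φ l₀ c = (r : EReal) := by
    intro c hc
    have hcpos : (0 : ℝ) < c := lt_of_lt_of_le hc₀ hc
    refine le_antisymm (hth₀ ▸ hdom l₀ hl₀ c hcpos) ?_
    rw [← hth₀]
    refine iInf₂_mono fun x hx => ?_
    exact add_le_add_right (hA7 (G x) l₀ hl₀ c₀ c hc₀ hc) _
  have key : ∀ c ≥ c₀, (⨆ l ∈ Λ, lagr f G Φ x₀ l c) ≤ lagr f G Φ x₀ l₀ c ∧
      lagr f G Φ x₀ l₀ c ≤ (⨅ x ∈ Q, lagr f G Φ x l₀ c) ∧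
      (⨅ x ∈ Q, lagr f G Φ x l₀ c) < ⊤ := by
    intro c hc
    have hcpos : (0 : ℝ) < c := lt_of_lt_of_le hc₀ hc
    have hinf : (⨅ x ∈ Q, lagr f G Φ x l₀ c) = (r : EReal) := hth c hc
    have hle : ∀ l ∈ Λ, lagr f G Φ x₀ l c ≤ (r : EReal) := by
      intro l hl
      calc lagr f G Φ x₀ l c = f x₀ + Φ (G x₀) l c := rfl
        _ ≤ f x₀ + 0 := add_le_add_right (hA1 (G x₀) hGx₀ l hl c hcpos) _
        _ = (r : EReal) := by rw [add_zero, hfx₀]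
    have hge : (r : EReal) ≤ lagr f G Φ x₀ l₀ c := by
      rw [← hinf]; exact iInf₂_le x₀ hx₀Q
    have heq : lagr f G Φ x₀ l₀ c = (r : EReal) :=
      le_antisymm (hle l₀ hl₀) hge
    refine ⟨?_, ?_, ?_⟩
    · rw [heq]; exact iSup₂_le hle
    · rw [heq, hinf]
    · rw [hinf]; exact EReal.coe_lt_top r
  constructor
  · exact ⟨hx₀Q, hl₀, c₀, hc₀, key⟩
  · apply csInf_le
    · exact ⟨0, fun c hc => hc.1.le⟩
    · exact ⟨hc₀, key⟩
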